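/- Let 0 < ε < 1 and let x = (x₁, x₂) ∈ Ω_ε. Then there exists φ ∈ BMO_ε((0,1]) with ∫₀¹ φ = x₁, ∫₀¹ φ² = x₂, and ∫₀¹ e^φ = B⁺_ε(x). In particular the supremum of ⟨e^φ⟩_I over φ ∈ BMO_ε(I) with ⟨φ⟩_I = x₁, ⟨φ²⟩_I = x₂ is at least B⁺_ε(x). -/

import Mathlib

open MeasureTheory Real intervalIntegral Topology

/-- The average of `φ` over the interval with endpoints `a`, `b`. -/
noncomputable def avg (φ : ℝ → ℝ) (a b : ℝ) : ℝ := (∫ t in a..b, φ t) / (b - a)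

/-- `φ ∈ BMO_ε([a,b])`: `φ` and `φ²` are integrable on `[a,b]` and the mean
oscillation `⟨φ²⟩_J − ⟨φ⟩_J²` is at most `ε²` on every nondegenerate
subinterval `J = [c,d] ⊆ [a,b]`. -/
def BMOe (ε a b : ℝ) (φ : ℝ → ℝ) : Prop :=
  IntervalIntegrable φ volume a b ∧
  IntervalIntegrable (fun t => (φ t) ^ 2) volume a b ∧
  ∀ c d : ℝ, a ≤ c → c < d → d ≤ b →
    avg (fun t => (φ t) ^ 2) c d - (avg φ c d) ^ 2 ≤ ε ^ 2
/-- The parabolic strip `Ω_ε = {x : x₁² ≤ x₂ ≤ x₁² + ε²}`. -/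
def Omega (ε : ℝ) : Set (ℝ × ℝ) := {x | x.1 ^ 2 ≤ x.2 ∧ x.2 ≤ x.1 ^ 2 + ε ^ 2}

/-- The upper Bellman function `B⁺_δ`. -/
noncomputable def Bp (δ : ℝ) (x : ℝ × ℝ) : ℝ :=
  (1 - Real.sqrt (δ ^ 2 + x.1 ^ 2 - x.2)) / (1 - δ) *
    Real.exp (x.1 + Real.sqrt (δ ^ 2 + x.1 ^ 2 - x.2) - δ)

/-- The lower Bellman function `B⁻_δ`. -/
noncomputable def Bm (δ : ℝ) (x : ℝ × ℝ) : ℝ :=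
  (1 + Real.sqrt (δ ^ 2 + x.1 ^ 2 - x.2)) / (1 + δ) *
    Real.exp (x.1 - Real.sqrt (δ ^ 2 + x.1 ^ 2 - x.2) + δ)

lemma neg_log_le (r t : ℝ) (hr : 0 < r) (ht : 0 < t) : -Real.log t ≤ (1/r) * t ^ (-r) := by
  have h := Real.log_le_sub_one_of_pos (Real.rpow_pos_of_pos ht (-r))
  rw [Real.log_rpow ht] at h
  have h2 : (0:ℝ) < t ^ (-r) := Real.rpow_pos_of_pos ht (-r)
  have h3 : -(r * Real.log t) ≤ t ^ (-r) := by linarith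
  calc -Real.log t = (1/r) * (-(r * Real.log t)) := by field_simp
    _ ≤ (1/r) * t ^ (-r) := by
        apply mul_le_mul_of_nonneg_left h3 (by positivity)

lemma intInt_log01 : IntervalIntegrable Real.log volume 0 1 := by
  rw [intervalIntegrable_iff_integrableOn_Ioc_of_le (by norm_num)]
  have hmaj : IntegrableOn (fun t : ℝ => 2 * t ^ (-(1/2) : ℝ)) (Set.Ioc 0 1) volume := by
    have := (intervalIntegrable_rpow' (a := 0) (b := 1) (r := -(1/2)) (by norm_num)).const_mul 2
    rwa [intervalIntegrable_iff_integrableOn_Ioc_of_le (by norm_num)] at this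
  apply Integrable.mono' hmaj (Real.measurable_log.aestronglyMeasurable)
  filter_upwards [ae_restrict_mem measurableSet_Ioc] with t ht
  have h1 : -Real.log t ≤ 2 * t ^ (-(1/2):ℝ) := by
    have := neg_log_le (1/2) t (by norm_num) ht.1
    norm_num at this ⊢; linarith
  have h2 : Real.log t ≤ 0 := Real.log_nonpos ht.1.le ht.2
  rw [Real.norm_eq_abs, abs_of_nonpos h2]
  exact h1

lemma intInt_log01_sq : IntervalIntegrable (fun t => (Real.log t)^2) volume 0 1 := by
  rw [intervalIntegrable_iff_integrableOn_Ioc_of_le (by norm_num)]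
  have hmaj : IntegrableOn (fun t : ℝ => 16 * t ^ (-(1/2) : ℝ)) (Set.Ioc 0 1) volume := by
    have := (intervalIntegrable_rpow' (a := 0) (b := 1) (r := -(1/2)) (by norm_num)).const_mul 16
    rwa [intervalIntegrable_iff_integrableOn_Ioc_of_le (by norm_num)] at this
  apply Integrable.mono' hmaj ((Real.measurable_log.pow_const 2).aestronglyMeasurable)
  filter_upwards [ae_restrict_mem measurableSet_Ioc] with t ht
  have h1 : -Real.log t ≤ 4 * t ^ (-(1/4):ℝ) := by
    have := neg_log_le (1/4) t (by norm_num) ht.1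
    norm_num at this ⊢; linarith
  have h2 : Real.log t ≤ 0 := Real.log_nonpos ht.1.le ht.2
  have h5 : (t ^ (-(1/4):ℝ))^2 = t ^ (-(1/2):ℝ) := by
    rw [← Real.rpow_natCast (t ^ (-(1/4):ℝ)) 2, ← Real.rpow_mul ht.1.le]
    norm_num
  have h4 : (Real.log t)^2 ≤ (4 * t ^ (-(1/4):ℝ))^2 := by
    have := neg_nonneg.mpr h2
    nlinarith
  rw [Real.norm_eq_abs, abs_of_nonneg (sq_nonneg _)]
  calc (Real.log t)^2 ≤ (4 * t ^ (-(1/4):ℝ))^2 := h4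
    _ = 16 * t ^ (-(1/2):ℝ) := by rw [mul_pow, h5]; norm_num


lemma contOn_sqrt_mul_log : ContinuousOn (fun t => Real.log t * t ^ (1/2:ℝ)) (Set.Icc (0:ℝ) 1) := by
  intro x hx
  rcases eq_or_lt_of_le hx.1 with h | h
  · -- x = 0
    subst h  -- wrong direction? hx.1 : 0 ≤ x, h : 0 = x
    have hsub : Set.Icc (0:ℝ) 1 ⊆ {0} ∪ Set.Ioi 0 := by
      intro y hy; rcases eq_or_lt_of_le hy.1 with h'|h'
      · exact Or.inl h'.symm
      · exact Or.inr h'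
    have hle : 𝓝[Set.Icc (0:ℝ) 1] 0 ≤ 𝓝[({0} ∪ Set.Ioi 0 : Set ℝ)] 0 := nhdsWithin_mono 0 hsub
    unfold ContinuousWithinAt
    have hval : Real.log 0 * (0:ℝ) ^ (1/2:ℝ) = 0 := by
      simp [Real.zero_rpow (by norm_num : (1/2:ℝ) ≠ 0)]
    have hval' : (fun t : ℝ => Real.log t * t ^ (1/2:ℝ)) 0 = 0 := hval
    rw [hval']
    apply Filter.Tendsto.mono_left _ hle
    rw [nhdsWithin_union]
    rw [Filter.tendsto_sup]
    constructor
    · rw [nhdsWithin_singleton]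
      have : Filter.Tendsto (fun t : ℝ => Real.log t * t ^ (1/2:ℝ)) (pure 0) (pure ((fun t : ℝ => Real.log t * t ^ (1/2:ℝ)) 0)) := Filter.tendsto_pure_pure _ _
      simpa [hval] using this.mono_right (pure_le_nhds _)
    · exact tendsto_log_mul_rpow_nhdsGT_zero (by norm_num)
  · exact (((Real.continuousAt_log (ne_of_gt h)).mul ((Real.continuousAt_rpow_const x (1/2) (Or.inl (ne_of_gt h))))).continuousWithinAt)

lemma contOn_mul_log : ContinuousOn (fun t => t * Real.log t) (Set.Icc (0:ℝ) 1) :=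
  Real.continuous_mul_log.continuousOn

lemma contOn_mul_log_sq : ContinuousOn (fun t => t * (Real.log t)^2) (Set.Icc (0:ℝ) 1) := by
  have h := (contOn_sqrt_mul_log.pow 2)
  apply ContinuousOn.congr h
  intro t ht
  have : (t ^ (1/2:ℝ))^2 = t := by
    rw [← Real.rpow_natCast (t ^ (1/2:ℝ)) 2, ← Real.rpow_mul ht.1]
    norm_num
  simp only [Pi.pow_apply, mul_pow, this]
  ring

lemma intInt_quad (C0 C1 C2 : ℝ) {c b : ℝ} (hc : 0 ≤ c) (hcb : c ≤ b) (hb : b ≤ 1) :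
    IntervalIntegrable (fun t => C0 + C1 * Real.log t + C2 * (Real.log t)^2) volume c b := by
  have hs : Set.uIcc c b ⊆ Set.uIcc (0:ℝ) 1 := by
    apply Set.uIcc_subset_uIcc <;> rw [Set.uIcc_of_le (by norm_num : (0:ℝ) ≤ 1)]
    · exact ⟨hc, le_trans hcb hb⟩
    · exact ⟨le_trans hc hcb, hb⟩
  exact ((_root_.intervalIntegrable_const).add ((intInt_log01.mono_set hs).const_mul C1)).add
    ((intInt_log01_sq.mono_set hs).const_mul C2)

lemma ftc_quad (C0 C1 C2 : ℝ) {c b : ℝ} (hc : 0 ≤ c) (hcb : c ≤ b) (hb : b ≤ 1) :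
    ∫ t in c..b, (C0 + C1 * Real.log t + C2 * (Real.log t)^2) =
      (C0*b + C1*(b*Real.log b - b) + C2*(b*(Real.log b)^2 - 2*(b*Real.log b) + 2*b))
      - (C0*c + C1*(c*Real.log c - c) + C2*(c*(Real.log c)^2 - 2*(c*Real.log c) + 2*c)) := by
  set F : ℝ → ℝ := fun t => C0*t + C1*(t*Real.log t - t) + C2*(t*(Real.log t)^2 - 2*(t*Real.log t) + 2*t) with hF
  have hIcc : Set.Icc c b ⊆ Set.Icc (0:ℝ) 1 := Set.Icc_subset_Icc hc hb
  have hcont : ContinuousOn F (Set.Icc c b) := by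
    apply ContinuousOn.add
    apply ContinuousOn.add
    · exact (continuous_const.mul continuous_id).continuousOn
    · exact (continuousOn_const.mul (((contOn_mul_log.mono hIcc).sub (continuous_id.continuousOn)))) |>.congr (fun t ht => rfl)
    · refine continuousOn_const.mul ?_
      exact ((contOn_mul_log_sq.mono hIcc).sub ((continuousOn_const.mul (contOn_mul_log.mono hIcc)))).add
        (continuousOn_const.mul continuous_id.continuousOn)
  have hderiv : ∀ t ∈ Set.Ioo c b, HasDerivAt F (C0 + C1 * Real.log t + C2 * (Real.log t)^2) t := by
    intro t ht
    have ht0 : t ≠ 0 := ne_of_gt (lt_of_le_of_lt hc ht.1)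
    have h1 : HasDerivAt (fun t : ℝ => t * Real.log t) (Real.log t + 1) t := Real.hasDerivAt_mul_log ht0
    have hlog : HasDerivAt Real.log t⁻¹ t := Real.hasDerivAt_log ht0
    have h2 : HasDerivAt (fun t : ℝ => t * (Real.log t)^2) ((Real.log t)^2 + 2*Real.log t) t := by
      have := (hasDerivAt_id t).mul (hlog.pow 2)
      convert this using 1
      have : (t:ℝ) ≠ 0 := ht0
      · rfl
      · rfl
      · rfl
      · simp only [id, Pi.pow_apply]; field_simp; norm_num; ring
    have : HasDerivAt F (C0*1 + C1*((Real.log t + 1) - 1) + C2*(((Real.log t)^2 + 2*Real.log t) - 2*(Real.log t + 1) + 2*1)) t := by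
      exact (((hasDerivAt_id t).const_mul C0).add
        (((h1.sub (hasDerivAt_id t)).const_mul C1))).add
        (((h2.sub ((h1.const_mul 2))).add ((hasDerivAt_id t).const_mul 2)).const_mul C2)
    convert this using 1
    ring
  have hint := intInt_quad C0 C1 C2 hc hcb hb
  have := intervalIntegral.integral_eq_sub_of_hasDeriv_right_of_le hcb hcont
    (fun t ht => (hderiv t ht).hasDerivWithinAt) hint
  rw [this]

section pieces
variable (ε a A : ℝ)

-- pointwise identity on the log piece
lemma phi_eq_log (ha : 0 < a) {c b : ℝ} (hc : 0 ≤ c) (hcb : c ≤ b) (hba : b ≤ a)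
    {t : ℝ} (ht : t ∈ Set.uIoc c b) :
    A + ε * max 0 (Real.log (a/t)) = A + ε * (Real.log a - Real.log t) := by
  rw [Set.uIoc_of_le hcb] at ht
  have ht0 : 0 < t := lt_of_le_of_lt hc ht.1
  rw [Real.log_div (ne_of_gt ha) (ne_of_gt ht0),
    max_eq_right (sub_nonneg.mpr (Real.log_le_log ht0 (le_trans ht.2 hba)))]

lemma phi_eq_const {c d : ℝ} (ha : 0 ≤ a) (hac : a ≤ c) (hcd : c ≤ d)
    {t : ℝ} (ht : t ∈ Set.uIoc c d) :
    A + ε * max 0 (Real.log (a/t)) = A := by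
  rw [Set.uIoc_of_le hcd] at ht
  have ht0 : 0 < t := lt_of_le_of_lt (le_trans ha hac) ht.1
  have : a / t ≤ 1 := by
    rw [div_le_one ht0]; exact le_trans hac ht.1.le
  rw [max_eq_left (neg_nonneg.mp (by simpa using Real.log_nonpos (by positivity) this)), mul_zero, add_zero]

lemma int_phi_log (ha : 0 ≤ a) (ha1 : a ≤ 1) {c b : ℝ} (hc : 0 ≤ c) (hcb : c ≤ b) (hba : b ≤ a) :
    ∫ t in c..b, (A + ε * max 0 (Real.log (a/t))) =
      ((A + ε*Real.log a)*b + (-ε)*(b*Real.log b - b))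
      - ((A + ε*Real.log a)*c + (-ε)*(c*Real.log c - c)) := by
  rcases eq_or_lt_of_le ha with h0 | ha
  · have hb0 : b = 0 := le_antisymm (h0 ▸ hba) (hc.trans hcb)
    have hc0 : c = 0 := le_antisymm (hb0 ▸ hcb) hc
    subst hb0; subst hc0
    simp
  have h1 : ∫ t in c..b, (A + ε * max 0 (Real.log (a/t)))
      = ∫ t in c..b, ((A + ε*Real.log a) + (-ε) * Real.log t + 0 * (Real.log t)^2) := by
    apply intervalIntegral.integral_congr_ae
    apply Filter.Eventually.of_forall
    intro t ht
    rw [phi_eq_log ε a A ha hc hcb hba ht]; ring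
  rw [h1, ftc_quad _ _ _ hc hcb (le_trans hba ha1)]
  ring

lemma int_phi2_log (ha : 0 ≤ a) (ha1 : a ≤ 1) {c b : ℝ} (hc : 0 ≤ c) (hcb : c ≤ b) (hba : b ≤ a) :
    ∫ t in c..b, (A + ε * max 0 (Real.log (a/t)))^2 =
      (((A + ε*Real.log a)^2)*b + (-2*ε*(A + ε*Real.log a))*(b*Real.log b - b)
        + ε^2*(b*(Real.log b)^2 - 2*(b*Real.log b) + 2*b))
      - (((A + ε*Real.log a)^2)*c + (-2*ε*(A + ε*Real.log a))*(c*Real.log c - c)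
        + ε^2*(c*(Real.log c)^2 - 2*(c*Real.log c) + 2*c)) := by
  rcases eq_or_lt_of_le ha with h0 | ha
  · have hb0 : b = 0 := le_antisymm (h0 ▸ hba) (hc.trans hcb)
    have hc0 : c = 0 := le_antisymm (hb0 ▸ hcb) hc
    subst hb0; subst hc0
    simp
  have h1 : ∫ t in c..b, (A + ε * max 0 (Real.log (a/t)))^2
      = ∫ t in c..b, ((A + ε*Real.log a)^2 + (-2*ε*(A + ε*Real.log a)) * Real.log t
          + ε^2 * (Real.log t)^2) := by
    apply intervalIntegral.integral_congr_ae
    apply Filter.Eventually.of_forall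
    intro t ht
    rw [phi_eq_log ε a A ha hc hcb hba ht]; ring
  rw [h1, ftc_quad _ _ _ hc hcb (le_trans hba ha1)]

lemma int_phi_const {c d : ℝ} (ha : 0 ≤ a) (hac : a ≤ c) (hcd : c ≤ d) :
    ∫ t in c..d, (A + ε * max 0 (Real.log (a/t))) = A * (d - c) := by
  have h1 : ∫ t in c..d, (A + ε * max 0 (Real.log (a/t))) = ∫ _ in c..d, A := by
    apply intervalIntegral.integral_congr_ae
    exact Filter.Eventually.of_forall (fun t ht => phi_eq_const ε a A ha hac hcd ht)
  rw [h1, intervalIntegral.integral_const, smul_eq_mul, mul_comm]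

lemma int_phi2_const {c d : ℝ} (ha : 0 ≤ a) (hac : a ≤ c) (hcd : c ≤ d) :
    ∫ t in c..d, (A + ε * max 0 (Real.log (a/t)))^2 = A^2 * (d - c) := by
  have h1 : ∫ t in c..d, (A + ε * max 0 (Real.log (a/t)))^2 = ∫ _ in c..d, A^2 := by
    apply intervalIntegral.integral_congr_ae
    exact Filter.Eventually.of_forall (fun t ht => by rw [phi_eq_const ε a A ha hac hcd ht])
  rw [h1, intervalIntegral.integral_const, smul_eq_mul, mul_comm]

lemma int_exp_const {c d : ℝ} (ha : 0 ≤ a) (hac : a ≤ c) (hcd : c ≤ d) :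
    ∫ t in c..d, Real.exp (A + ε * max 0 (Real.log (a/t))) = Real.exp A * (d - c) := by
  have h1 : ∫ t in c..d, Real.exp (A + ε * max 0 (Real.log (a/t))) = ∫ _ in c..d, Real.exp A := by
    apply intervalIntegral.integral_congr_ae
    exact Filter.Eventually.of_forall (fun t ht => by rw [phi_eq_const ε a A ha hac hcd ht])
  rw [h1, intervalIntegral.integral_const, smul_eq_mul, mul_comm]

lemma int_exp_log (hε0 : 0 < ε) (hε1 : ε < 1) (ha : 0 ≤ a) {b : ℝ} (hb : 0 ≤ b) (hba : b ≤ a) :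
    ∫ t in (0:ℝ)..b, Real.exp (A + ε * max 0 (Real.log (a/t)))
      = Real.exp A * a^ε * (b^(1-ε)/(1-ε)) := by
  rcases eq_or_lt_of_le ha with h0 | ha
  · have hb0 : b = 0 := le_antisymm (h0 ▸ hba) hb
    subst hb0
    rw [intervalIntegral.integral_same, Real.zero_rpow (by intro h; linarith [h] : (1:ℝ)-ε ≠ 0)]
    simp
  have h1 : ∫ t in (0:ℝ)..b, Real.exp (A + ε * max 0 (Real.log (a/t)))
      = ∫ t in (0:ℝ)..b, (Real.exp A * a^ε) * t^(-ε) := by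
    apply intervalIntegral.integral_congr_ae
    apply Filter.Eventually.of_forall
    intro t ht
    rw [phi_eq_log ε a A ha le_rfl hb hba ht]
    rw [Set.uIoc_of_le hb] at ht
    have ht0 : 0 < t := ht.1
    rw [Real.rpow_def_of_pos ha, Real.rpow_def_of_pos ht0, ← Real.exp_add, ← Real.exp_add]
    congr 1; ring
  rw [h1, intervalIntegral.integral_const_mul,
    integral_rpow (Or.inl (by linarith : (-1:ℝ) < -ε)),
    Real.zero_rpow (by intro h; linarith [h] : -ε + 1 ≠ 0),
    show -ε + 1 = 1 - ε by ring, sub_zero]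

end pieces

section intgr
variable (ε a A : ℝ)

lemma intgr_phi_log (ha : 0 ≤ a) (ha1 : a ≤ 1) {c b : ℝ} (hc : 0 ≤ c) (hcb : c ≤ b) (hba : b ≤ a) :
    IntervalIntegrable (fun t => A + ε * max 0 (Real.log (a/t))) volume c b := by
  rcases eq_or_lt_of_le ha with h0 | h0
  · have : c = b := le_antisymm hcb (by rw [← h0] at hba; linarith [le_trans hc hcb])
    subst this
    exact IntervalIntegrable.refl
  rw [intervalIntegrable_iff_integrableOn_Ioc_of_le hcb]
  have hq := intInt_quad (A + ε*Real.log a) (-ε) 0 hc hcb (le_trans hba ha1)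
  rw [intervalIntegrable_iff_integrableOn_Ioc_of_le hcb] at hq
  apply hq.congr
  apply (ae_restrict_iff' measurableSet_Ioc).mpr
  apply ae_of_all
  intro t ht
  beta_reduce
  have ht' : t ∈ Set.uIoc c b := by rw [Set.uIoc_of_le hcb]; exact ht
  rw [phi_eq_log ε a A h0 hc hcb hba ht']
  ring

lemma intgr_phi2_log (ha : 0 ≤ a) (ha1 : a ≤ 1) {c b : ℝ} (hc : 0 ≤ c) (hcb : c ≤ b) (hba : b ≤ a) :
    IntervalIntegrable (fun t => (A + ε * max 0 (Real.log (a/t)))^2) volume c b := by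
  rcases eq_or_lt_of_le ha with h0 | h0
  · have : c = b := le_antisymm hcb (by rw [← h0] at hba; linarith [le_trans hc hcb])
    subst this
    exact IntervalIntegrable.refl
  rw [intervalIntegrable_iff_integrableOn_Ioc_of_le hcb]
  have hq := intInt_quad ((A + ε*Real.log a)^2) (-2*ε*(A + ε*Real.log a)) (ε^2) hc hcb (le_trans hba ha1)
  rw [intervalIntegrable_iff_integrableOn_Ioc_of_le hcb] at hq
  apply hq.congr
  apply (ae_restrict_iff' measurableSet_Ioc).mpr
  apply ae_of_all
  intro t ht
  beta_reduce
  have ht' : t ∈ Set.uIoc c b := by rw [Set.uIoc_of_le hcb]; exact ht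
  rw [phi_eq_log ε a A h0 hc hcb hba ht']
  ring

lemma intgr_exp_log (hε1 : ε < 1) (ha : 0 ≤ a) {c b : ℝ} (hc : 0 ≤ c) (hcb : c ≤ b) (hba : b ≤ a) :
    IntervalIntegrable (fun t => Real.exp (A + ε * max 0 (Real.log (a/t)))) volume c b := by
  rcases eq_or_lt_of_le ha with h0 | h0
  · have : c = b := le_antisymm hcb (by rw [← h0] at hba; linarith [le_trans hc hcb])
    subst this
    exact IntervalIntegrable.refl
  rw [intervalIntegrable_iff_integrableOn_Ioc_of_le hcb]
  have hq := (intervalIntegrable_rpow' (a := c) (b := b) (r := -ε) (by linarith)).const_mul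
    (Real.exp A * a ^ ε)
  rw [intervalIntegrable_iff_integrableOn_Ioc_of_le hcb] at hq
  apply hq.congr
  apply (ae_restrict_iff' measurableSet_Ioc).mpr
  apply ae_of_all
  intro t ht
  beta_reduce
  have ht' : t ∈ Set.uIoc c b := by rw [Set.uIoc_of_le hcb]; exact ht
  have ht0 : 0 < t := lt_of_le_of_lt hc ht.1
  rw [phi_eq_log ε a A h0 hc hcb hba ht',
    Real.rpow_def_of_pos h0, Real.rpow_def_of_pos ht0, ← Real.exp_add, ← Real.exp_add]
  congr 1; ring

lemma intgr_phi_const {c d : ℝ} (ha : 0 ≤ a) (hac : a ≤ c) (hcd : c ≤ d) :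
    IntervalIntegrable (fun t => A + ε * max 0 (Real.log (a/t))) volume c d := by
  rw [intervalIntegrable_iff_integrableOn_Ioc_of_le hcd]
  have hq : IntegrableOn (fun _ : ℝ => A) (Set.Ioc c d) volume := integrableOn_const
    measure_Ioc_lt_top.ne
  apply hq.congr
  apply (ae_restrict_iff' measurableSet_Ioc).mpr
  apply ae_of_all
  intro t ht
  beta_reduce
  have ht' : t ∈ Set.uIoc c d := by rw [Set.uIoc_of_le hcd]; exact ht
  rw [phi_eq_const ε a A ha hac hcd ht']

lemma intgr_phi2_const {c d : ℝ} (ha : 0 ≤ a) (hac : a ≤ c) (hcd : c ≤ d) :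
    IntervalIntegrable (fun t => (A + ε * max 0 (Real.log (a/t)))^2) volume c d := by
  rw [intervalIntegrable_iff_integrableOn_Ioc_of_le hcd]
  have hq : IntegrableOn (fun _ : ℝ => A^2) (Set.Ioc c d) volume := integrableOn_const
    measure_Ioc_lt_top.ne
  apply hq.congr
  apply (ae_restrict_iff' measurableSet_Ioc).mpr
  apply ae_of_all
  intro t ht
  beta_reduce
  have ht' : t ∈ Set.uIoc c d := by rw [Set.uIoc_of_le hcd]; exact ht
  rw [phi_eq_const ε a A ha hac hcd ht']

lemma intgr_exp_const {c d : ℝ} (ha : 0 ≤ a) (hac : a ≤ c) (hcd : c ≤ d) :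
    IntervalIntegrable (fun t => Real.exp (A + ε * max 0 (Real.log (a/t)))) volume c d := by
  rw [intervalIntegrable_iff_integrableOn_Ioc_of_le hcd]
  have hq : IntegrableOn (fun _ : ℝ => Real.exp A) (Set.Ioc c d) volume := integrableOn_const
    measure_Ioc_lt_top.ne
  apply hq.congr
  apply (ae_restrict_iff' measurableSet_Ioc).mpr
  apply ae_of_all
  intro t ht
  beta_reduce
  have ht' : t ∈ Set.uIoc c d := by rw [Set.uIoc_of_le hcd]; exact ht
  rw [phi_eq_const ε a A ha hac hcd ht']

end intgr

set_option maxHeartbeats 2000000 in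
/-- For every point of `Ω_ε` (with `0 < ε < 1`) there is an extremal function
in `BMO_ε((0,1])` attaining the value `B⁺_ε(x)`; in particular the Bellman
supremum is at least `B⁺_ε(x)`. -/
theorem stmt6 (ε : ℝ) (hε0 : 0 < ε) (hε1 : ε < 1) (x : ℝ × ℝ) (hx : x ∈ Omega ε) :
    ∃ φ : ℝ → ℝ, BMOe ε 0 1 φ ∧
      (∫ t in (0:ℝ)..1, φ t) = x.1 ∧
      (∫ t in (0:ℝ)..1, (φ t) ^ 2) = x.2 ∧
      IntervalIntegrable (fun t => Real.exp (φ t)) volume 0 1 ∧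
      (∫ t in (0:ℝ)..1, Real.exp (φ t)) = Bp ε x := by
  obtain ⟨hx1, hx2⟩ := hx
  have hnn : 0 ≤ ε^2 + x.1^2 - x.2 := by linarith
  set u := Real.sqrt (ε^2 + x.1^2 - x.2) with hu
  have hu2 : u^2 = ε^2 + x.1^2 - x.2 := Real.sq_sqrt hnn
  have hu0 : 0 ≤ u := Real.sqrt_nonneg _
  have huε : u ≤ ε := by
    calc u ≤ Real.sqrt (ε^2) := by rw [hu]; exact Real.sqrt_le_sqrt (by linarith)
      _ = ε := Real.sqrt_sq hε0.le
  set a := 1 - u/ε with ha_def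
  have ha0 : 0 ≤ a := by rw [ha_def, sub_nonneg, div_le_one hε0]; exact huε
  have ha1 : a ≤ 1 := by
    have : 0 ≤ u/ε := div_nonneg hu0 hε0.le
    rw [ha_def]; linarith
  have hεa : ε * a = ε - u := by rw [ha_def]; field_simp
  have hu' : u = ε - ε*a := by linarith
  set A := x.1 - ε*a with hA_def
  clear_value A
  clear_value a
  clear_value u
  refine ⟨fun t => A + ε * max 0 (Real.log (a/t)), ⟨?_, ?_, ?_⟩, ?_, ?_, ?_, ?_⟩
  · exact (intgr_phi_log ε a A ha0 ha1 le_rfl ha0 le_rfl).trans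
      (intgr_phi_const ε a A ha0 le_rfl ha1)
  · exact (intgr_phi2_log ε a A ha0 ha1 le_rfl ha0 le_rfl).trans
      (intgr_phi2_const ε a A ha0 le_rfl ha1)
  · -- BMO oscillation bound
    intro c d hc hcd hd
    have hL : 0 < d - c := by linarith
    have main : (∫ t in c..d, (A + ε * max 0 (Real.log (a/t)))^2) * (d - c)
        - (∫ t in c..d, (A + ε * max 0 (Real.log (a/t))))^2 ≤ ε^2 * (d-c)^2 := by
      rcases le_or_gt a c with hac | hca
      · rw [int_phi_const ε a A ha0 hac hcd.le, int_phi2_const ε a A ha0 hac hcd.le]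
        nlinarith [sq_nonneg (ε*(d-c))]
      · rcases le_or_gt d a with hda | had
        · rw [int_phi_log ε a A ha0 ha1 hc hcd.le hda, int_phi2_log ε a A ha0 ha1 hc hcd.le hda]
          nlinarith [mul_nonneg (mul_nonneg (mul_nonneg (sq_nonneg ε) hc)
            (le_trans hc hcd.le)) (sq_nonneg (Real.log d - Real.log c))]
        · rw [← intervalIntegral.integral_add_adjacent_intervals
              (intgr_phi_log ε a A ha0 ha1 hc hca.le le_rfl)
              (intgr_phi_const ε a A ha0 le_rfl had.le),
            ← intervalIntegral.integral_add_adjacent_intervals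
              (intgr_phi2_log ε a A ha0 ha1 hc hca.le le_rfl)
              (intgr_phi2_const ε a A ha0 le_rfl had.le),
            int_phi_log ε a A ha0 ha1 hc hca.le le_rfl,
            int_phi_const ε a A ha0 le_rfl had.le,
            int_phi2_log ε a A ha0 ha1 hc hca.le le_rfl,
            int_phi2_const ε a A ha0 le_rfl had.le]
          rcases hc.eq_or_lt with hc0 | hc0
          · rw [← hc0]
            simp only [Real.log_zero]
            nlinarith [sq_nonneg (ε*(d-a))]
          · have hp : 0 ≤ Real.log a - Real.log c := sub_nonneg.mpr (Real.log_le_log hc0 hca.le)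
            have hda : 0 ≤ d - a := by linarith
            have h1 : 0 ≤ ε^2 * ((d-a)*(d-a)) := by positivity
            have h2 : 0 ≤ ε^2 * ((d-a)*(c*((Real.log a - Real.log c)*(Real.log a - Real.log c)))) :=
              mul_nonneg (sq_nonneg ε) (mul_nonneg hda (mul_nonneg hc (mul_nonneg hp hp)))
            have h3 : 0 ≤ ε^2 * ((d-a)*(c*(Real.log a - Real.log c))) :=
              mul_nonneg (sq_nonneg ε) (mul_nonneg hda (mul_nonneg hc hp))
            have h4 : 0 ≤ ε^2 * (c*(a*((Real.log a - Real.log c)*(Real.log a - Real.log c)))) :=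
              mul_nonneg (sq_nonneg ε) (mul_nonneg hc (mul_nonneg (by linarith : (0:ℝ) ≤ a)
                (mul_nonneg hp hp)))
            nlinarith [h1, h2, h3, h4]
    unfold avg
    have hrw : (∫ t in c..d, (A + ε * max 0 (Real.log (a/t)))^2)/(d-c)
        - ((∫ t in c..d, (A + ε * max 0 (Real.log (a/t))))/(d-c))^2
        = ((∫ t in c..d, (A + ε * max 0 (Real.log (a/t)))^2) * (d - c)
            - (∫ t in c..d, (A + ε * max 0 (Real.log (a/t))))^2)/(d-c)^2 := by
      field_simp
    show (∫ t in c..d, (A + ε * max 0 (Real.log (a/t)))^2)/(d-c)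
        - ((∫ t in c..d, (A + ε * max 0 (Real.log (a/t))))/(d-c))^2 ≤ ε^2
    rw [hrw, div_le_iff₀ (by positivity)]
    exact main
  · show (∫ t in (0:ℝ)..1, (A + ε * max 0 (Real.log (a/t)))) = x.1
    rw [← intervalIntegral.integral_add_adjacent_intervals
        (intgr_phi_log ε a A ha0 ha1 le_rfl ha0 le_rfl)
        (intgr_phi_const ε a A ha0 le_rfl ha1),
      int_phi_log ε a A ha0 ha1 le_rfl ha0 le_rfl,
      int_phi_const ε a A ha0 le_rfl ha1]
    simp only [Real.log_zero]
    rw [hA_def]; ring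
  · show (∫ t in (0:ℝ)..1, (A + ε * max 0 (Real.log (a/t)))^2) = x.2
    rw [← intervalIntegral.integral_add_adjacent_intervals
        (intgr_phi2_log ε a A ha0 ha1 le_rfl ha0 le_rfl)
        (intgr_phi2_const ε a A ha0 le_rfl ha1),
      int_phi2_log ε a A ha0 ha1 le_rfl ha0 le_rfl,
      int_phi2_const ε a A ha0 le_rfl ha1]
    simp only [Real.log_zero]
    have hx2eq : x.2 = ε^2 + x.1^2 - u^2 := by linarith
    rw [hx2eq, hu', hA_def]; ring
  · exact (intgr_exp_log ε a A hε1 ha0 le_rfl ha0 le_rfl).trans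
      (intgr_exp_const ε a A ha0 le_rfl ha1)
  · show (∫ t in (0:ℝ)..1, Real.exp (A + ε * max 0 (Real.log (a/t)))) = Bp ε x
    rw [← intervalIntegral.integral_add_adjacent_intervals
        (intgr_exp_log ε a A hε1 ha0 le_rfl ha0 le_rfl)
        (intgr_exp_const ε a A ha0 le_rfl ha1),
      int_exp_log ε a A hε0 hε1 ha0 ha0 le_rfl,
      int_exp_const ε a A ha0 le_rfl ha1]
    have hra : a^ε * a^(1-ε) = a := by
      rcases ha0.eq_or_lt with h0 | h0
      · rw [← h0, Real.zero_rpow (ne_of_gt hε0), zero_mul]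
      · rw [← Real.rpow_add h0]; norm_num
    unfold Bp
    rw [← hu]
    rw [show x.1 + u - ε = A by rw [hA_def]; linarith]
    rw [mul_assoc, ← mul_div_assoc, hra, hu', hA_def]
    have h1ε : (1:ℝ) - ε ≠ 0 := by intro h; linarith
    field_simp
    ring
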